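/- The map (p,P,ψ) ↦ Ξₚ(P,ψ) is continuous from (ℝ \ {−(k+1)/2 : k ∈ ℕ₀}) × ℝ^{2×2} × ℝ into pairs of entire functions endowed with the topology of locally uniform convergence: if (pᵢ,Pᵢ,ψᵢ) → (p,P,ψ) with all pᵢ and p avoiding {−(k+1)/2 : k ∈ ℕ₀}, and (Aᵢ,Bᵢ) = Ξ_{pᵢ}(Pᵢ,ψᵢ), (A,B) = Ξₚ(P,ψ), then Aᵢ → A and Bᵢ → B uniformly on every compact subset of ℂ. -/

import Mathlib

open Matrix MeasureTheory Filter

noncomputable section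

def matJ : Matrix (Fin 2) (Fin 2) ℝ := !![0, -1; 1, 0]

def Dpsi (p ψ a : ℝ) : Matrix (Fin 2) (Fin 2) ℝ :=
  if p = 0 then !![1, 0; ψ * Real.log a, 1]
  else !![1, 0; ψ / (2 * p), 1] * !![a ^ p, 0; 0, a ^ (-p)] * !![1, 0; -ψ / (2 * p), 1]

def HPpsi (p ψ : ℝ) (P : Matrix (Fin 2) (Fin 2) ℝ) (a : ℝ) : Matrix (Fin 2) (Fin 2) ℝ :=
  Dpsi p ψ a * P * (Dpsi p ψ a)ᵀ

def SatRec (p : ℝ) (P : Matrix (Fin 2) (Fin 2) ℝ) (ψ : ℝ) (α β : ℕ → ℝ) : Prop :=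
  α 0 = 1 ∧ β 0 = 0 ∧ ∀ n : ℕ,
    !![α (n + 1), β (n + 1)] =
      (-1 / (((n : ℝ) + 1) * (2 * p + (n : ℝ) + 1))) •
        (!![α n, β n] * (P * matJ * !![2 * p + (n : ℝ) + 1, 0; ψ, (n : ℝ) + 1]))

def genF (c : ℕ → ℝ) (z : ℂ) : ℂ := ∑' n : ℕ, (c n : ℂ) * z ^ n

def rowAB (p ψ : ℝ) (α β : ℕ → ℝ) (a : ℝ) (z : ℂ) : Matrix (Fin 1) (Fin 2) ℂ :=
  !![((a ^ p : ℝ) : ℂ) * genF α ((a : ℂ) * z), ((a ^ p : ℝ) : ℂ) * genF β ((a : ℂ) * z)] *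
    ((Dpsi p ψ a)⁻¹).map Complex.ofReal

lemma satRec_scalar {p ψ : ℝ} {P : Matrix (Fin 2) (Fin 2) ℝ} {α β : ℕ → ℝ}
    (h : SatRec p P ψ α β) (n : ℕ) :
    α (n+1) = -1/(((n:ℝ)+1)*(2*p+(n:ℝ)+1)) *
        (α n * (P 0 1*(2*p+(n:ℝ)+1) - P 0 0*ψ) + β n * (P 1 1*(2*p+(n:ℝ)+1) - P 1 0*ψ)) ∧
    β (n+1) = -1/(((n:ℝ)+1)*(2*p+(n:ℝ)+1)) * (-(((n:ℝ)+1)) * (α n * P 0 0 + β n * P 1 0)) := by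
  have h1 := congrFun (congrFun (h.2.2 n) 0) 0
  have h2 := congrFun (congrFun (h.2.2 n) 0) 1
  simp [Matrix.mul_apply, Matrix.vecMul, dotProduct, Fin.sum_univ_two, matJ,
    Matrix.smul_apply, Matrix.vecHead, Matrix.vecTail] at h1 h2
  constructor
  · rw [h1]; ring
  · rw [h2]; ring

set_option maxHeartbeats 1000000 in
/-- Uniform factorial bound for solutions of the recurrence, with explicit constants. -/
lemma coeff_bound {p ψ MP Mψ Mp δ : ℝ} {P : Matrix (Fin 2) (Fin 2) ℝ} {α β : ℕ → ℝ} {N₀ : ℕ}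
    (h : SatRec p P ψ α β) (hMP : 0 ≤ MP) (hMψ : 0 ≤ Mψ) (hMp : 0 ≤ Mp) (hδ : 0 < δ)
    (hPb : ∀ a b : Fin 2, |P a b| ≤ MP) (hψb : |ψ| ≤ Mψ) (hpb : |p| ≤ Mp)
    (hN₀ : 4*Mp ≤ (N₀:ℝ)) (hlow : ∀ n : ℕ, n < N₀ → δ ≤ |2*p+(n:ℝ)+1|) :
    ∀ n : ℕ, (|α n| + |β n|) * (n.factorial : ℝ) ≤
      (MP*(2*Mp+Mψ+2)*N₀/δ + 2*(MP*(2*Mp+Mψ+2)) + 1) ^ n := by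
  set K := MP*(2*Mp+Mψ+2) with hK
  have hK0 : 0 ≤ K := by positivity
  set G := K*N₀/δ + 2*K + 1 with hG
  have hKN : 0 ≤ K*N₀/δ := by positivity
  have hG1 : (1:ℝ) ≤ G := by rw [hG]; linarith
  -- step inequality
  have hstep : ∀ n : ℕ, |α (n+1)| + |β (n+1)| ≤
      K / |2*p+(n:ℝ)+1| * (|α n| + |β n|) := by
    intro n
    obtain ⟨ha, hb⟩ := satRec_scalar h n
    set d : ℝ := 2*p+(n:ℝ)+1 with hd
    have hn1 : (0:ℝ) < (n:ℝ)+1 := by positivity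
    have hdpos : 0 < |d| := by
      rcases lt_or_ge n N₀ with hn | hn
      · exact lt_of_lt_of_le hδ (hlow n hn)
      · have h1 : 4*Mp ≤ (n:ℝ) := le_trans hN₀ (by exact_mod_cast hn)
        have hpb' := abs_le.mp hpb
        have : 0 < d := by simp only [hd]; nlinarith [hpb'.1]
        exact abs_pos.mpr (ne_of_gt this)
    have hdb : |d| ≤ 2*Mp + (n:ℝ) + 1 := by
      have h1 := abs_le.mp hpb
      rw [abs_le]
      constructor <;> simp only [hd] <;> nlinarith [h1.1, h1.2]
    -- entry bounds
    have hδψ : (0:ℝ) ≤ |ψ| := abs_nonneg ψ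
    have hδd : (0:ℝ) ≤ |d| := abs_nonneg d
    have ebd : ∀ a : Fin 2, |P a 1*d - P a 0*ψ| ≤ MP*(2*Mp+Mψ+((n:ℝ)+1)) := by
      intro a
      have t := abs_sub (P a 1*d) (P a 0*ψ)
      rw [abs_mul, abs_mul] at t
      have u1 : |P a 1| * |d| ≤ MP * (2*Mp+(n:ℝ)+1) :=
        mul_le_mul (hPb a 1) hdb hδd hMP
      have u2 : |P a 0| * |ψ| ≤ MP * Mψ :=
        mul_le_mul (hPb a 0) hψb hδψ hMP
      have e : MP*(2*Mp+(n:ℝ)+1) + MP*Mψ = MP*(2*Mp+Mψ+((n:ℝ)+1)) := by ring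
      linarith
    have b1 := ebd 0
    have b2 := ebd 1
    -- bound for α (n+1)
    have hα : |α (n+1)| ≤ 1/(((n:ℝ)+1)*|d|) * ((|α n| + |β n|) * (MP*(2*Mp+Mψ+((n:ℝ)+1)))) := by
      rw [ha, abs_mul]
      have e1 : |(-1)/(((n:ℝ)+1)*d)| = 1/(((n:ℝ)+1)*|d|) := by
        rw [abs_div, abs_mul, abs_neg, abs_one, abs_of_pos hn1]
      rw [e1]
      have hin : |α n * (P 0 1*d - P 0 0*ψ) + β n * (P 1 1*d - P 1 0*ψ)| ≤
          (|α n| + |β n|) * (MP*(2*Mp+Mψ+((n:ℝ)+1))) := by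
        have t := abs_add_le (α n * (P 0 1*d - P 0 0*ψ)) (β n * (P 1 1*d - P 1 0*ψ))
        rw [abs_mul, abs_mul] at t
        have u1 := mul_le_mul_of_nonneg_left b1 (abs_nonneg (α n))
        have u2 := mul_le_mul_of_nonneg_left b2 (abs_nonneg (β n))
        have e : (|α n|+|β n|) * (MP*(2*Mp+Mψ+((n:ℝ)+1)))
            = |α n| * (MP*(2*Mp+Mψ+((n:ℝ)+1))) + |β n| * (MP*(2*Mp+Mψ+((n:ℝ)+1))) := by ring
        linarith
      exact mul_le_mul_of_nonneg_left hin (by positivity)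
    -- bound for β (n+1)
    have hβ : |β (n+1)| ≤ 1/|d| * ((|α n| + |β n|) * MP) := by
      rw [hb]
      have hdne : d ≠ 0 := abs_pos.mp hdpos
      have e2 : -1/(((n:ℝ)+1)*d) * (-(((n:ℝ)+1)) * (α n * P 0 0 + β n * P 1 0)) =
          (1/d) * (α n * P 0 0 + β n * P 1 0) := by
        field_simp
      rw [e2, abs_mul, abs_div, abs_one]
      have hin : |α n * P 0 0 + β n * P 1 0| ≤ (|α n| + |β n|) * MP := by
        have t := abs_add_le (α n * P 0 0) (β n * P 1 0)
        rw [abs_mul, abs_mul] at t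
        have u1 := mul_le_mul_of_nonneg_left (hPb 0 0) (abs_nonneg (α n))
        have u2 := mul_le_mul_of_nonneg_left (hPb 1 0) (abs_nonneg (β n))
        have e : (|α n|+|β n|) * MP = |α n| * MP + |β n| * MP := by ring
        linarith
      exact mul_le_mul_of_nonneg_left hin (by positivity)
    -- combine
    have key : 1/(((n:ℝ)+1)*|d|) * ((|α n| + |β n|) * (MP*(2*Mp+Mψ+((n:ℝ)+1)))) +
        1/|d| * ((|α n| + |β n|) * MP) ≤ K / |d| * (|α n| + |β n|) := by
      rw [hK, ← sub_nonneg]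
      have e4 : MP*(2*Mp+Mψ+2) / |d| * (|α n| + |β n|)
          - (1/(((n:ℝ)+1)*|d|) * ((|α n| + |β n|) * (MP*(2*Mp+Mψ+((n:ℝ)+1))))
             + 1/|d| * ((|α n| + |β n|) * MP))
          = (|α n| + |β n|) * (MP*(2*Mp+Mψ+2)*((n:ℝ)+1)
              - (MP*(2*Mp+Mψ+((n:ℝ)+1)) + ((n:ℝ)+1)*MP))
              / (((n:ℝ)+1) * |d|) := by
        field_simp
      rw [e4]
      have hnum : 0 ≤ MP*(2*Mp+Mψ+2)*((n:ℝ)+1) - (MP*(2*Mp+Mψ+((n:ℝ)+1)) + ((n:ℝ)+1)*MP) := by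
        have hn0 : (0:ℝ) ≤ (n:ℝ) := Nat.cast_nonneg n
        have e5 : MP*(2*Mp+Mψ+2)*((n:ℝ)+1) - (MP*(2*Mp+Mψ+((n:ℝ)+1)) + ((n:ℝ)+1)*MP)
            = MP*(2*Mp+Mψ)*(n:ℝ) := by ring
        rw [e5]
        positivity
      positivity
    calc |α (n+1)| + |β (n+1)| ≤ _ + _ := add_le_add hα hβ
      _ ≤ K / |d| * (|α n| + |β n|) := key
  -- factor bound
  have hfac : ∀ n : ℕ, K / |2*p+(n:ℝ)+1| * ((n:ℝ)+1) ≤ G := by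
    intro n
    set d : ℝ := 2*p+(n:ℝ)+1 with hd
    rcases lt_or_ge n N₀ with hn | hn
    · have h1 : δ ≤ |d| := hlow n hn
      have h2 : (n:ℝ)+1 ≤ (N₀:ℝ) := by exact_mod_cast hn
      have h3 : K / |d| ≤ K / δ := div_le_div_of_nonneg_left hK0 hδ h1
      calc K / |d| * ((n:ℝ)+1) ≤ K / δ * (N₀:ℝ) :=
            mul_le_mul h3 h2 (by positivity) (by positivity)
        _ = K*N₀/δ := by ring
        _ ≤ G := by rw [hG]; linarith
    · have h1 : 4*Mp ≤ (n:ℝ) := le_trans hN₀ (by exact_mod_cast hn)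
      have hpb' := abs_le.mp hpb
      have hdge : ((n:ℝ)+1)/2 ≤ d := by simp only [hd]; nlinarith [hpb'.1]
      have hdpos : 0 < d := lt_of_lt_of_le (by positivity) hdge
      rw [abs_of_pos hdpos]
      have h3 : K / d ≤ K / (((n:ℝ)+1)/2) :=
        div_le_div_of_nonneg_left hK0 (by positivity) hdge
      calc K / d * ((n:ℝ)+1) ≤ K / (((n:ℝ)+1)/2) * ((n:ℝ)+1) :=
            mul_le_mul_of_nonneg_right h3 (by positivity)
        _ = 2*K := by field_simp
        _ ≤ G := by rw [hG]; linarith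
  -- main induction
  intro n
  induction n with
  | zero => simp [h.1, h.2.1]
  | succ n ih =>
    have hfn : (((n+1):ℕ).factorial : ℝ) = ((n:ℝ)+1) * (n.factorial : ℝ) := by
      rw [Nat.factorial_succ]; push_cast; ring
    calc (|α (n+1)| + |β (n+1)|) * (((n+1):ℕ).factorial : ℝ)
        ≤ (K / |2*p+(n:ℝ)+1| * (|α n| + |β n|)) * (((n+1):ℕ).factorial : ℝ) :=
          mul_le_mul_of_nonneg_right (hstep n) (by positivity)
      _ = (K / |2*p+(n:ℝ)+1| * ((n:ℝ)+1)) * ((|α n| + |β n|) * (n.factorial : ℝ)) := by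
          rw [hfn]; ring
      _ ≤ G * G^n := by
          apply mul_le_mul (hfac n) ih (by positivity)
          linarith
      _ = G^(n+1) := by rw [pow_succ]; ring


lemma exists_low (p : ℝ) (hp : ∀ k : ℕ, p ≠ -((k : ℝ) + 1) / 2) (N : ℕ) :
    ∃ δ > 0, ∀ n : ℕ, n < N → δ ≤ |2*p+(n:ℝ)+1| := by
  induction N with
  | zero => exact ⟨1, one_pos, fun n hn => absurd hn (Nat.not_lt_zero n)⟩
  | succ N ih =>
    obtain ⟨δ, hδ, hb⟩ := ih
    have hne : 2*p+(N:ℝ)+1 ≠ 0 := by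
      intro hh
      exact hp N (by linarith)
    refine ⟨min δ |2*p+(N:ℝ)+1|, lt_min hδ (abs_pos.mpr hne), ?_⟩
    intro n hn
    rcases Nat.lt_succ_iff_lt_or_eq.mp hn with hcase | hcase
    · exact le_trans (min_le_left _ _) (hb n hcase)
    · subst hcase; exact min_le_right _ _

lemma unif_conv (ci : ℕ → ℕ → ℝ) (c : ℕ → ℝ) (Fi : ℕ → ℂ → ℂ) (F : ℂ → ℂ) (K : Set ℂ)
    (R G : ℝ) (hG : 0 ≤ G) (hR : 0 ≤ R) (hKR : ∀ z ∈ K, ‖z‖ ≤ R)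
    (hFi : ∀ i z, HasSum (fun n => (ci i n : ℂ) * z^n) (Fi i z))
    (hF : ∀ z, HasSum (fun n => (c n : ℂ) * z^n) (F z))
    (hb : ∀ᶠ i in atTop, ∀ n : ℕ, |ci i n| ≤ G^n / (n.factorial : ℝ))
    (hbl : ∀ n : ℕ, |c n| ≤ G^n / (n.factorial : ℝ))
    (hptw : ∀ n, Tendsto (fun i => ci i n) atTop (nhds (c n))) :
    TendstoUniformlyOn (fun i => Fi i) F atTop K := by
  rw [Metric.tendstoUniformlyOn_iff]
  intro ε hε
  set g : ℕ → ℝ := fun n => 2 * ((G*R)^n / (n.factorial : ℝ)) with hg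
  have hgs : Summable g := (Real.summable_pow_div_factorial (G*R)).mul_left 2
  have htail : Tendsto (fun N => ∑' k, g (k+N)) atTop (nhds 0) := tendsto_sum_nat_add g
  obtain ⟨N, hN⟩ : ∃ N, ∑' k, g (k+N) < ε/2 := by
    rcases (htail.eventually_lt_const (by linarith : (0:ℝ) < ε/2)).exists with ⟨N, hN⟩
    exact ⟨N, hN⟩
  -- finite part tends to zero
  have hfin : Tendsto (fun i => ∑ n ∈ Finset.range N, |c n - ci i n| * R^n) atTop (nhds 0) := by
    have : ∀ n ∈ Finset.range N, Tendsto (fun i => |c n - ci i n| * R^n) atTop (nhds 0) := by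
      intro n _
      have : Tendsto (fun i => c n - ci i n) atTop (nhds 0) := by
        have h2 := Tendsto.const_sub (c n) (hptw n)
        simpa using h2
      simpa using (this.abs.mul_const (R^n))
    have h0 : (0:ℝ) = ∑ n ∈ Finset.range N, (0:ℝ) := by simp
    rw [h0]
    exact tendsto_finset_sum _ this
  have hfin2 : ∀ᶠ i in atTop, ∑ n ∈ Finset.range N, |c n - ci i n| * R^n < ε/2 :=
    hfin.eventually_lt_const (by linarith)
  filter_upwards [hb, hfin2] with i hbi hfi
  intro z hz
  have hzR : ‖z‖ ≤ R := hKR z hz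
  -- term bounds
  set u : ℕ → ℝ := fun n => |c n - ci i n| * ‖z‖^n with hu
  have hub : ∀ n, u n ≤ g n := by
    intro n
    have h1 : |c n - ci i n| ≤ 2 * (G^n / (n.factorial : ℝ)) := by
      have := abs_sub (c n) (ci i n)
      have := hbl n; have := hbi n
      linarith [abs_sub (c n) (ci i n), hbl n, hbi n]
    have h2 : ‖z‖^n ≤ R^n := pow_le_pow_left₀ (norm_nonneg z) hzR n
    calc u n ≤ (2 * (G^n / (n.factorial : ℝ))) * R^n :=
          mul_le_mul h1 h2 (by positivity) (by positivity)
      _ = g n := by rw [hg]; simp only [mul_pow]; field_simp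
  have hu0 : ∀ n, 0 ≤ u n := fun n => by positivity
  have hus : Summable u := Summable.of_nonneg_of_le hu0 hub hgs
  -- sum representation
  have hdiff : HasSum (fun n => ((c n - ci i n : ℝ) : ℂ) * z^n) (F z - Fi i z) := by
    have := (hF z).sub (hFi i z)
    convert this using 2 with n
    push_cast
    rfl
    push_cast
    ring
  have hnormeq : ∀ n, ‖((c n - ci i n : ℝ) : ℂ) * z^n‖ = u n := by
    intro n
    rw [norm_mul, norm_pow, Complex.norm_real, Real.norm_eq_abs]
  have hnorms : Summable fun n => ‖((c n - ci i n : ℝ) : ℂ) * z^n‖ := by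
    simpa only [hnormeq] using hus
  have hle : ‖F z - Fi i z‖ ≤ ∑' n, u n := by
    rw [← hdiff.tsum_eq]
    calc ‖∑' n, ((c n - ci i n : ℝ) : ℂ) * z^n‖ ≤ ∑' n, ‖((c n - ci i n : ℝ) : ℂ) * z^n‖ :=
          norm_tsum_le_tsum_norm hnorms
      _ = ∑' n, u n := by exact tsum_congr hnormeq
  -- split
  have hsplit : ∑' n, u n = (∑ n ∈ Finset.range N, u n) + ∑' k, u (k+N) :=
    (Summable.sum_add_tsum_nat_add N hus).symm
  have hpart1 : ∑ n ∈ Finset.range N, u n ≤ ∑ n ∈ Finset.range N, |c n - ci i n| * R^n := by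
    apply Finset.sum_le_sum
    intro n _
    exact mul_le_mul_of_nonneg_left (pow_le_pow_left₀ (norm_nonneg z) hzR n) (abs_nonneg _)
  have hpart2 : ∑' k, u (k+N) ≤ ∑' k, g (k+N) := by
    apply Summable.tsum_le_tsum (fun k => hub (k+N))
    · exact (summable_nat_add_iff N).mpr hus
    · exact (summable_nat_add_iff N).mpr hgs
  rw [dist_eq_norm]
  calc ‖F z - Fi i z‖ ≤ ∑' n, u n := hle
    _ = _ := hsplit
    _ < ε/2 + ε/2 := by
        apply add_lt_add_of_le_of_lt (le_trans hpart1 hfi.le) (lt_of_le_of_lt hpart2 hN)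
    _ = ε := by ring


/-- continuity of (p,P,ψ) ↦ Ξₚ(P,ψ) with respect to locally uniform
convergence of the generating functions. -/
theorem statement4 (pi : ℕ → ℝ) (Pi : ℕ → Matrix (Fin 2) (Fin 2) ℝ) (psii : ℕ → ℝ)
    (p : ℝ) (P : Matrix (Fin 2) (Fin 2) ℝ) (ψ : ℝ)
    (hpi : ∀ i k : ℕ, pi i ≠ -((k : ℝ) + 1) / 2)
    (hp : ∀ k : ℕ, p ≠ -((k : ℝ) + 1) / 2)
    (hpc : Tendsto pi atTop (nhds p))
    (hPc : Tendsto Pi atTop (nhds P))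
    (hψc : Tendsto psii atTop (nhds ψ))
    (αi βi : ℕ → ℕ → ℝ) (α β : ℕ → ℝ)
    (hreci : ∀ i : ℕ, SatRec (pi i) (Pi i) (psii i) (αi i) (βi i))
    (hrec : SatRec p P ψ α β)
    (Ai Bi : ℕ → ℂ → ℂ) (A B : ℂ → ℂ)
    (hAi : ∀ i : ℕ, ∀ z : ℂ, HasSum (fun n : ℕ => (αi i n : ℂ) * z ^ n) (Ai i z))
    (hBi : ∀ i : ℕ, ∀ z : ℂ, HasSum (fun n : ℕ => (βi i n : ℂ) * z ^ n) (Bi i z))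
    (hA : ∀ z : ℂ, HasSum (fun n : ℕ => (α n : ℂ) * z ^ n) (A z))
    (hB : ∀ z : ℂ, HasSum (fun n : ℕ => (β n : ℂ) * z ^ n) (B z)) :
    ∀ K : Set ℂ, IsCompact K →
      TendstoUniformlyOn (fun i => Ai i) A atTop K ∧
      TendstoUniformlyOn (fun i => Bi i) B atTop K := by
  intro K hK
  -- entrywise convergence of the matrices
  have hE : ∀ a b : Fin 2, Tendsto (fun i => Pi i a b) atTop (nhds (P a b)) := fun a b =>
    ((continuous_id.matrix_elem a b).tendsto P).comp hPc
  -- pointwise convergence of the coefficients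
  have hptw : ∀ n : ℕ, Tendsto (fun i => αi i n) atTop (nhds (α n)) ∧
      Tendsto (fun i => βi i n) atTop (nhds (β n)) := by
    intro n
    induction n with
    | zero =>
      constructor
      · have e : (fun i => αi i 0) = fun _ => (1:ℝ) := funext fun i => (hreci i).1
        rw [e, hrec.1]; exact tendsto_const_nhds
      · have e : (fun i => βi i 0) = fun _ => (0:ℝ) := funext fun i => (hreci i).2.1
        rw [e, hrec.2.1]; exact tendsto_const_nhds
    | succ n ih =>
      obtain ⟨ih1, ih2⟩ := ih
      have hdne : 2*p+(n:ℝ)+1 ≠ 0 := fun hh => hp n (by linarith)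
      have hdden : ((n:ℝ)+1)*(2*p+(n:ℝ)+1) ≠ 0 :=
        mul_ne_zero (by positivity) hdne
      have hpn : Tendsto (fun i => 2*pi i+(n:ℝ)+1) atTop (nhds (2*p+(n:ℝ)+1)) :=
        ((hpc.const_mul 2).add_const ((n:ℝ))).add_const 1
      have hf : Tendsto (fun i => -1/(((n:ℝ)+1)*(2*pi i+(n:ℝ)+1))) atTop
          (nhds (-1/(((n:ℝ)+1)*(2*p+(n:ℝ)+1)))) :=
        tendsto_const_nhds.div (hpn.const_mul ((n:ℝ)+1)) hdden
      constructor
      · have hnum : Tendsto (fun i => αi i n * (Pi i 0 1*(2*pi i+(n:ℝ)+1) - Pi i 0 0*psii i)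
            + βi i n * (Pi i 1 1*(2*pi i+(n:ℝ)+1) - Pi i 1 0*psii i)) atTop
            (nhds (α n * (P 0 1*(2*p+(n:ℝ)+1) - P 0 0*ψ)
              + β n * (P 1 1*(2*p+(n:ℝ)+1) - P 1 0*ψ))) :=
          (ih1.mul (((hE 0 1).mul hpn).sub ((hE 0 0).mul hψc))).add
            (ih2.mul (((hE 1 1).mul hpn).sub ((hE 1 0).mul hψc)))
        have hT := hf.mul hnum
        rw [← (satRec_scalar hrec n).1] at hT
        exact hT.congr fun i => ((satRec_scalar (hreci i) n).1).symm
      · have hnum : Tendsto (fun i => -(((n:ℝ)+1)) * (αi i n * Pi i 0 0 + βi i n * Pi i 1 0))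
            atTop (nhds (-(((n:ℝ)+1)) * (α n * P 0 0 + β n * P 1 0))) :=
          ((ih1.mul (hE 0 0)).add (ih2.mul (hE 1 0))).const_mul (-(((n:ℝ)+1)))
        have hT := hf.mul hnum
        rw [← (satRec_scalar hrec n).2] at hT
        exact hT.congr fun i => ((satRec_scalar (hreci i) n).2).symm
  -- constants
  obtain ⟨MP, hMP0, hPbL, hbP⟩ : ∃ MP : ℝ, 0 ≤ MP ∧ (∀ a b : Fin 2, |P a b| ≤ MP) ∧
      (∀ᶠ i in atTop, ∀ a b : Fin 2, |Pi i a b| ≤ MP) := by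
    refine ⟨|P 0 0| + |P 0 1| + |P 1 0| + |P 1 1| + 1, by positivity, ?_, ?_⟩
    · simp only [Fin.forall_fin_two]
      refine ⟨⟨?_, ?_⟩, ⟨?_, ?_⟩⟩ <;>
        · have := abs_nonneg (P 0 0); have := abs_nonneg (P 0 1)
          have := abs_nonneg (P 1 0); have := abs_nonneg (P 1 1)
          linarith
    · have key : ∀ a b : Fin 2,
          |P a b| < |P 0 0| + |P 0 1| + |P 1 0| + |P 1 1| + 1 := by
        simp only [Fin.forall_fin_two]
        refine ⟨⟨?_, ?_⟩, ⟨?_, ?_⟩⟩ <;>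
          · have := abs_nonneg (P 0 0); have := abs_nonneg (P 0 1)
            have := abs_nonneg (P 1 0); have := abs_nonneg (P 1 1)
            linarith
      filter_upwards [Tendsto.eventually_lt_const (key 0 0) (hE 0 0).abs,
        Tendsto.eventually_lt_const (key 0 1) (hE 0 1).abs,
        Tendsto.eventually_lt_const (key 1 0) (hE 1 0).abs,
        Tendsto.eventually_lt_const (key 1 1) (hE 1 1).abs] with i h1 h2 h3 h4
      simp only [Fin.forall_fin_two]
      exact ⟨⟨h1.le, h2.le⟩, ⟨h3.le, h4.le⟩⟩
  obtain ⟨Mψ, hMψ0, hψbL, hbψ⟩ : ∃ Mψ : ℝ, 0 ≤ Mψ ∧ |ψ| ≤ Mψ ∧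
      ∀ᶠ i in atTop, |psii i| ≤ Mψ := by
    refine ⟨|ψ| + 1, by positivity, by linarith [abs_nonneg ψ], ?_⟩
    filter_upwards [Tendsto.eventually_lt_const (lt_add_one |ψ|) hψc.abs] with i h1
    exact h1.le
  obtain ⟨Mp, hMp0, hpbL, hbp⟩ : ∃ Mp : ℝ, 0 ≤ Mp ∧ |p| ≤ Mp ∧
      ∀ᶠ i in atTop, |pi i| ≤ Mp := by
    refine ⟨|p| + 1, by positivity, by linarith [abs_nonneg p], ?_⟩
    filter_upwards [Tendsto.eventually_lt_const (lt_add_one |p|) hpc.abs] with i h1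
    exact h1.le
  obtain ⟨N₀, hN₀⟩ := exists_nat_ge (4*Mp)
  obtain ⟨δ, hδpos, hlowL, hbd⟩ : ∃ δ : ℝ, 0 < δ ∧
      (∀ n : ℕ, n < N₀ → δ ≤ |2*p+(n:ℝ)+1|) ∧
      (∀ᶠ i in atTop, ∀ n : ℕ, n < N₀ → δ ≤ |2*pi i+(n:ℝ)+1|) := by
    obtain ⟨δ0, hδ0, hlow0⟩ := exists_low p hp N₀
    refine ⟨δ0/2, by linarith, fun n hn => by linarith [hlow0 n hn], ?_⟩
    have hdist : ∀ᶠ i in atTop, dist (pi i) p < δ0/4 :=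
      Metric.tendsto_nhds.mp hpc (δ0/4) (by positivity)
    filter_upwards [hdist] with i h1
    intro n hn
    rw [Real.dist_eq] at h1
    have t := abs_sub_abs_le_abs_sub (2*p+(n:ℝ)+1) (2*pi i+(n:ℝ)+1)
    have e : 2*p+(n:ℝ)+1 - (2*pi i+(n:ℝ)+1) = -(2*(pi i - p)) := by ring
    rw [e, abs_neg, abs_mul] at t
    have habs2 : |(2:ℝ)| = 2 := by norm_num
    rw [habs2] at t
    have h2 := abs_sub_comm (pi i) p
    have := hlow0 n hn
    linarith
  -- the uniform coefficient bound
  set G : ℝ := MP*(2*Mp+Mψ+2)*N₀/δ + 2*(MP*(2*Mp+Mψ+2)) + 1 with hGdef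
  have hG0 : 0 ≤ G := by
    have h1 : 0 ≤ MP*(2*Mp+Mψ+2)*N₀/δ :=
      div_nonneg (by positivity) (by linarith)
    have h2 : 0 ≤ MP*(2*Mp+Mψ+2) := by positivity
    rw [hGdef]; linarith
  have hboundi : ∀ᶠ i in atTop, ∀ n : ℕ,
      (|αi i n| + |βi i n|) * (n.factorial : ℝ) ≤ G^n := by
    filter_upwards [hbP, hbψ, hbp, hbd] with i h1 h2 h3 h4
    exact coeff_bound (hreci i) hMP0 hMψ0 hMp0 hδpos h1 h2 h3 hN₀ h4
  have hboundl : ∀ n : ℕ, (|α n| + |β n|) * (n.factorial : ℝ) ≤ G^n :=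
    coeff_bound hrec hMP0 hMψ0 hMp0 hδpos hPbL hψbL hpbL hN₀ hlowL
  -- convert to individual bounds
  have hsplit : ∀ (x y : ℝ) (n : ℕ), (|x| + |y|) * (n.factorial : ℝ) ≤ G^n →
      |x| ≤ G^n / (n.factorial : ℝ) ∧ |y| ≤ G^n / (n.factorial : ℝ) := by
    intro x y n hxy
    have hfp : (0:ℝ) < (n.factorial : ℝ) := by exact_mod_cast n.factorial_pos
    constructor
    · rw [le_div_iff₀ hfp]
      nlinarith [abs_nonneg y]
    · rw [le_div_iff₀ hfp]
      nlinarith [abs_nonneg x]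
  -- radius
  obtain ⟨r, hr⟩ := hK.isBounded.subset_closedBall (0:ℂ)
  have hKR : ∀ z ∈ K, ‖z‖ ≤ max r 0 := by
    intro z hz
    have := hr hz
    rw [Metric.mem_closedBall, dist_zero_right] at this
    exact le_trans this (le_max_left _ _)
  constructor
  · apply unif_conv αi α Ai A K (max r 0) G hG0 (le_max_right _ _) hKR hAi hA
    · filter_upwards [hboundi] with i h1
      exact fun n => (hsplit _ _ n (h1 n)).1
    · exact fun n => (hsplit _ _ n (hboundl n)).1
    · exact fun n => (hptw n).1
  · apply unif_conv βi β Bi B K (max r 0) G hG0 (le_max_right _ _) hKR hBi hB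
    · filter_upwards [hboundi] with i h1
      exact fun n => (hsplit _ _ n (h1 n)).2
    · exact fun n => (hsplit _ _ n (hboundl n)).2
    · exact fun n => (hptw n).2
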